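/- Let α₁ ∈ ℂ with α₁ ∉ {0, −1} and suppose α₁^{k+1} = 1 for some k ∈ ℕ with α₁ ≠ ±1. Let f(x,y) = (1/α₁ + α₁x + y, x/(1/α₁ + y)). Then f is periodic of period 2k+2, i.e., the (2k+2)-fold iterate of f is the identity wherever defined. -/

import Mathlib

theorem stmt_10 (α : ℂ) (hα0 : α ≠ 0) (hαm1 : α ≠ -1) (k : ℕ)
    (hroot : α ^ (k + 1) = 1) (hα1 : α ≠ 1) (hαn1 : α ≠ -1)
    (f : ℂ × ℂ → ℂ × ℂ)
    (hf : f = fun p => (1 / α + α * p.1 + p.2, p.1 / (1 / α + p.2)))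
    (x y : ℂ)
    (hdef : ∀ j < 2 * k + 2, 1 / α + (f^[j] (x, y)).2 ≠ 0) :
    f^[2 * k + 2] (x, y) = (x, y) := by
  set Y : ℕ → ℂ := fun j => (f^[j] (x, y)).2 with hY
  set X : ℕ → ℂ := fun j => (f^[j] (x, y)).1 with hX
  have hstepX : ∀ j, X (j + 1) = 1 / α + α * X j + Y j := by
    intro j
    simp only [hX, hY, Function.iterate_succ_apply', hf]
  have hstepY : ∀ j, Y (j + 1) = X j / (1 / α + Y j) := by
    intro j
    simp only [hX, hY, Function.iterate_succ_apply', hf]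
  -- two-step recurrence on Y
  have htwo : ∀ j, 1 / α + Y j ≠ 0 → 1 / α + Y (j + 1) ≠ 0 →
      Y (j + 2) = 1 + α * Y j := by
    intro j h1 h2
    have e1 : Y (j + 1) = X j / (1 / α + Y j) := hstepY j
    have e2 : Y (j + 2) = X (j + 1) / (1 / α + Y (j + 1)) := hstepY (j + 1)
    have e3 : X (j + 1) = 1 / α + α * X j + Y j := hstepX j
    have h1' : 1 + α * Y j ≠ 0 := by
      have he : 1 + α * Y j = α * (1 / α + Y j) := by field_simp
      rw [he]; exact mul_ne_zero hα0 h1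

    have hA : α * (1 / α) = 1 := by field_simp
    have hc : X j / (1 / α + Y j) * (1 / α + Y j) = X j := div_mul_cancel₀ _ h1
    rw [e2, e3, e1]
    rw [e1] at h2
    rw [div_eq_iff h2]
    linear_combination (-α) * hc + (X j / (1 / α + Y j) - Y j) * hA
  have hmulsum : ∀ m : ℕ, ∑ i ∈ Finset.range m, α ^ (i + 1)
      = α * ∑ i ∈ Finset.range m, α ^ i := by
    intro m
    rw [Finset.mul_sum]
    exact Finset.sum_congr rfl fun i _ => by ring
  -- even formula
  have heven : ∀ n, 2 * n ≤ 2 * k + 2 →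
      Y (2 * n) = α ^ n * y + ∑ i ∈ Finset.range n, α ^ i := by
    intro n
    induction n with
    | zero => intro _; simp [hY]
    | succ m ih =>
      intro hm
      have hm' : 2 * m ≤ 2 * k + 2 := by omega
      have h1 : 1 / α + Y (2 * m) ≠ 0 := hdef _ (by omega)
      have h2 : 1 / α + Y (2 * m + 1) ≠ 0 := hdef _ (by omega)
      have := htwo (2 * m) h1 h2
      have hidx : 2 * (m + 1) = 2 * m + 2 := by ring
      rw [hidx, this, ih hm', Finset.sum_range_succ', hmulsum]
      ring
  -- odd formula
  have hodd : ∀ n, n ≤ k →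
      Y (2 * n + 1) = α ^ n * Y 1 + ∑ i ∈ Finset.range n, α ^ i := by
    intro n
    induction n with
    | zero => intro _; simp
    | succ m ih =>
      intro hm
      have h1 : 1 / α + Y (2 * m + 1) ≠ 0 := hdef _ (by omega)
      have h2 : 1 / α + Y (2 * m + 2) ≠ 0 := hdef _ (by omega)
      have := htwo (2 * m + 1) h1 h2
      have hidx : 2 * (m + 1) + 1 = 2 * m + 1 + 2 := by ring
      rw [hidx, this, ih (by omega), Finset.sum_range_succ', hmulsum]
      ring
  have hαsub : α - 1 ≠ 0 := sub_ne_zero.mpr hα1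
  have hsum1 : ∑ i ∈ Finset.range (k + 1), α ^ i = 0 := by
    have := geom_sum_eq hα1 (k + 1)
    rw [this, hroot]
    simp
  have hαk : α ^ k = 1 / α := by
    field_simp
    rw [← pow_succ]
    exact hroot
  have hsum2 : ∑ i ∈ Finset.range k, α ^ i = -(1 / α) := by
    have h := Finset.sum_range_succ (fun i => α ^ i) k
    rw [hsum1] at h
    have : ∑ i ∈ Finset.range k, α ^ i = -α ^ k := by linear_combination -h
    rw [this, hαk]
  -- key values
  have hY2k2 : Y (2 * k + 2) = y := by
    have h := heven (k + 1) (by omega)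
    have hidx : 2 * (k + 1) = 2 * k + 2 := by ring
    rw [hidx] at h
    rw [h, hroot, hsum1]
    ring
  have hY2k1 : Y (2 * k + 1) = (1 / α) * Y 1 - 1 / α := by
    have h := hodd k le_rfl
    rw [h, hαk, hsum2]
    ring
  -- x₀ in terms of Y 1
  have h0 : 1 / α + Y 0 ≠ 0 := hdef 0 (by omega)
  have hY0 : Y 0 = y := by simp [hY]
  have hX0 : X 0 = x := by simp [hX]
  have hx0 : x = Y 1 * (1 / α + y) := by
    have h := hstepY 0
    rw [hY0, hX0] at h
    rw [hY0] at h0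
    rw [h, div_mul_cancel₀ _ h0]
  -- X (2k+1) from the step at j = 2k+1
  have h2k1 : 1 / α + Y (2 * k + 1) ≠ 0 := hdef _ (by omega)
  have hX2k1 : X (2 * k + 1) = y * (1 / α + Y (2 * k + 1)) := by
    have h := hstepY (2 * k + 1)
    have hidx : 2 * k + 1 + 1 = 2 * k + 2 := by ring
    rw [hidx, hY2k2] at h
    rw [h, div_mul_cancel₀ _ h2k1]
  have hX2k2 : X (2 * k + 2) = x := by
    have h := hstepX (2 * k + 1)
    have hidx : 2 * k + 1 + 1 = 2 * k + 2 := by ring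
    rw [hidx] at h
    rw [h, hX2k1, hY2k1, hx0]
    field_simp
    ring
  have : f^[2 * k + 2] (x, y) = (X (2 * k + 2), Y (2 * k + 2)) := by
    simp [hX, hY]
  rw [this, hX2k2, hY2k2]
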